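/- Let Θ be a nonempty compact topological space and let h, h', h'' : Θ → ℝ be continuous functions, none identically zero, with supremum norms ‖·‖_∞. Suppose 0 < ε ≤ ‖h‖_∞, that ‖h' − h‖_∞ < ε, and that ‖ h''/‖h''‖_∞ − h'/‖h'‖_∞ ‖_∞ < (ε − ‖h' − h‖_∞)/(‖h‖_∞ + ‖h' − h‖_∞). Then ‖ ‖h'‖_∞ · (h''/‖h''‖_∞) − h ‖_∞ < ε. -/

import Mathlib

/-- The quantitative estimate from Section `Borel`: if `‖h' − h‖∞ < ε ≤ ‖h‖∞` and the
normalization of `h''` is within `(ε − ‖h' − h‖)/(‖h‖ + ‖h' − h‖)` of that of `h'`,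
then the rescaling `‖h'‖ · (h''/‖h''‖)` lies in the `ε`-ball around `h`. -/
theorem normalization_rescale_estimate
    {Θ : Type*} [TopologicalSpace Θ] [CompactSpace Θ] [Nonempty Θ]
    (h h' h'' : C(Θ, ℝ)) (h_ne : h ≠ 0) (h'_ne : h' ≠ 0) (h''_ne : h'' ≠ 0)
    (ε : ℝ) (hε : 0 < ε) (hεh : ε ≤ ‖h‖)
    (h1 : ‖h' - h‖ < ε)
    (h2 : ‖(‖h''‖⁻¹ • h'') - (‖h'‖⁻¹ • h')‖ < (ε - ‖h' - h‖) / (‖h‖ + ‖h' - h‖)) :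
    ‖(‖h'‖ • (‖h''‖⁻¹ • h'')) - h‖ < ε := by
  have hn' : (0:ℝ) < ‖h'‖ := norm_pos_iff.mpr h'_ne
  have hn : (0:ℝ) < ‖h‖ := norm_pos_iff.mpr h_ne
  have hd : (0:ℝ) ≤ ‖h' - h‖ := norm_nonneg _
  have hden : (0:ℝ) < ‖h‖ + ‖h' - h‖ := by linarith
  have key : (‖h'‖ • (‖h''‖⁻¹ • h'')) - h
      = ‖h'‖ • ((‖h''‖⁻¹ • h'') - (‖h'‖⁻¹ • h')) + (h' - h) := by
    have : ‖h'‖ • (‖h'‖⁻¹ • h') = h' := smul_inv_smul₀ (ne_of_gt hn') h'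
    rw [smul_sub, this]; abel
  calc ‖(‖h'‖ • (‖h''‖⁻¹ • h'')) - h‖
      ≤ ‖h'‖ * ‖(‖h''‖⁻¹ • h'') - (‖h'‖⁻¹ • h')‖ + ‖h' - h‖ := by
        rw [key]
        refine (norm_add_le _ _).trans ?_
        simpa [abs_of_pos hn'] using norm_smul_le ‖h'‖ ((‖h''‖⁻¹ • h'') - (‖h'‖⁻¹ • h'))
    _ < ‖h'‖ * ((ε - ‖h' - h‖) / (‖h‖ + ‖h' - h‖)) + ‖h' - h‖ := by
        have := mul_lt_mul_of_pos_left h2 hn'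
        linarith
    _ ≤ (‖h‖ + ‖h' - h‖) * ((ε - ‖h' - h‖) / (‖h‖ + ‖h' - h‖)) + ‖h' - h‖ := by
        have hh' : ‖h'‖ ≤ ‖h‖ + ‖h' - h‖ := by
          have := norm_sub_norm_le h' h
          linarith
        have hq : (0:ℝ) ≤ (ε - ‖h' - h‖) / (‖h‖ + ‖h' - h‖) :=
          div_nonneg (by linarith) hden.le
        nlinarith
    _ = ε := by field_simp; ring
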